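/- Define U_n = Σ_{k=0}^{n} C(2k,k)^3 C(2n-2k,n-k) 2^{4(n-k)} for integers n ≥ 0, where C(m,j) is the binomial coefficient. Then for every integer n ≥ 1, the recurrence (n+1)^3 U_{n+1} - 8(2n+1)(8n^2+8n+5) U_n + 4096 n^3 U_{n-1} = 0 holds. -/
import Mathlib


open Nat

/-- The integer sequence `U_n` of Theorem 3. -/
def U (n : ℕ) : ℕ :=
  ∑ k ∈ Finset.range (n + 1),
    (Nat.choose (2 * k) k) ^ 3 * Nat.choose (2 * n - 2 * k) (n - k) * 2 ^ (4 * (n - k))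

/-- Central binomial coefficient, cast to `ℤ`. -/
def cbZ (n : ℕ) : ℤ := Nat.centralBinom n

/-- Catalan number, cast to `ℤ`. -/
def catZ (n : ℕ) : ℤ := catalan n

/-- The summand of `U`, cast to `ℤ`. -/
def tZ (n k : ℕ) : ℤ := cbZ k ^ 3 * cbZ (n - k) * 16 ^ (n - k)

/-- The telescoping certificate. -/
def gZ (n k : ℕ) : ℤ := 32 * (k : ℤ) ^ 3 * cbZ k ^ 3 * catZ (n - k) * 16 ^ (n - k)

lemma hcb (m : ℕ) : ((m : ℤ) + 1) * cbZ (m + 1) = 2 * (2 * m + 1) * cbZ m := by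
  have := Nat.succ_mul_centralBinom_succ m
  unfold cbZ
  exact_mod_cast congrArg (Nat.cast : ℕ → ℤ) this

lemma hcat (m : ℕ) : ((m : ℤ) + 1) * catZ m = cbZ m := by
  have := succ_mul_catalan_eq_centralBinom m
  unfold catZ cbZ
  exact_mod_cast congrArg (Nat.cast : ℕ → ℤ) this

/-- `U` as a sum of `tZ`. -/
lemma U_eq (n : ℕ) : (U n : ℤ) = ∑ k ∈ Finset.range (n + 1), tZ n k := by
  unfold U
  push_cast
  refine Finset.sum_congr rfl fun k hk => ?_
  have hk' : k ≤ n := Nat.lt_succ_iff.mp (Finset.mem_range.mp hk)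
  have h2 : 2 * n - 2 * k = 2 * (n - k) := by omega
  have h4 : (2 : ℤ) ^ (4 * (n - k)) = 16 ^ (n - k) := by
    rw [show (16 : ℤ) = 2 ^ 4 by norm_num, ← pow_mul, mul_comm 4 (n - k), mul_comm (n-k) 4]
  unfold tZ cbZ
  rw [h2, h4]
  rfl

/-- The key pointwise telescoping identity, generic case. -/
lemma key (k m : ℕ) :
    ((k : ℤ) + m + 2) ^ 3 * tZ (k + m + 2) k
      - 8 * (2 * ((k : ℤ) + m + 1) + 1) *
          (8 * ((k : ℤ) + m + 1) ^ 2 + 8 * ((k : ℤ) + m + 1) + 5) * tZ (k + m + 1) k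
      + 4096 * ((k : ℤ) + m + 1) ^ 3 * tZ (k + m) k
    = gZ (k + m + 1) (k + 1) - gZ (k + m + 1) k := by
  have s1 : k + m + 2 - k = m + 2 := by omega
  have s2 : k + m + 1 - k = m + 1 := by omega
  have s3 : k + m - k = m := by omega
  have s4 : k + m + 1 - (k + 1) = m := by omega
  unfold tZ gZ
  rw [s1, s2, s3, s4]
  have e1 : ((m : ℤ) + 1) * ((m : ℤ) + 2) * cbZ (m + 2) =
      4 * (2 * m + 3) * (2 * m + 1) * cbZ m := by
    have h1 := hcb (m + 1)
    have h2 := hcb m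
    push_cast at h1
    linear_combination ((m : ℤ) + 1) * h1 + (2 * (2 * (m : ℤ) + 3)) * h2
  have e2 : ((m : ℤ) + 1) * ((m : ℤ) + 2) * cbZ (m + 1) =
      2 * (2 * m + 1) * ((m : ℤ) + 2) * cbZ m := by
    linear_combination ((m : ℤ) + 2) * hcb m
  have e3 : ((m : ℤ) + 1) * ((m : ℤ) + 2) * catZ (m + 1) = 2 * (2 * m + 1) * cbZ m := by
    have h5 := hcat (m + 1)
    push_cast at h5
    linear_combination ((m : ℤ) + 1) * h5 + hcb m
  have e4 : ((m : ℤ) + 1) * ((m : ℤ) + 2) * catZ m = ((m : ℤ) + 2) * cbZ m := by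
    linear_combination ((m : ℤ) + 2) * hcat m
  have e5 : ((k : ℤ) + 1) ^ 3 * cbZ (k + 1) ^ 3 = 8 * (2 * k + 1) ^ 3 * cbZ k ^ 3 := by
    have h3 := hcb k
    linear_combination
      (((k : ℤ) + 1) ^ 2 * cbZ (k + 1) ^ 2 + ((k : ℤ) + 1) * cbZ (k + 1) * (2 * (2 * k + 1) * cbZ k)
        + (2 * (2 * (k : ℤ) + 1) * cbZ k) ^ 2) * h3
  have hne : ((m : ℤ) + 1) * ((m : ℤ) + 2) ≠ 0 := by positivity
  apply mul_left_cancel₀ hne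
  push_cast
  linear_combination
    ((k : ℤ) + m + 2) ^ 3 * cbZ k ^ 3 * 16 ^ (m + 2) * e1
    - 8 * (2 * ((k : ℤ) + m + 1) + 1) *
        (8 * ((k : ℤ) + m + 1) ^ 2 + 8 * ((k : ℤ) + m + 1) + 5) * cbZ k ^ 3 * 16 ^ (m + 1) * e2
    + 32 * (k : ℤ) ^ 3 * cbZ k ^ 3 * 16 ^ (m + 1) * e3
    - 32 * (16 : ℤ) ^ m * ((k : ℤ) + 1) ^ 3 * cbZ (k + 1) ^ 3 * e4
    - 32 * (16 : ℤ) ^ m * ((m : ℤ) + 2) * cbZ m * e5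

/-- The boundary identity at `k = n`. -/
lemma key2 (n : ℕ) :
    ((n : ℤ) + 1) ^ 3 * tZ (n + 1) n
      - 8 * (2 * (n : ℤ) + 1) * (8 * (n : ℤ) ^ 2 + 8 * (n : ℤ) + 5) * tZ n n
    = -(((n : ℤ) + 1) ^ 3 * cbZ (n + 1) ^ 3) - gZ n n := by
  have s1 : n + 1 - n = 1 := by omega
  have s2 : n - n = 0 := by omega
  unfold tZ gZ
  rw [s1, s2]
  have e5 : ((n : ℤ) + 1) ^ 3 * cbZ (n + 1) ^ 3 = 8 * (2 * n + 1) ^ 3 * cbZ n ^ 3 := by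
    have h3 := hcb n
    linear_combination
      (((n : ℤ) + 1) ^ 2 * cbZ (n + 1) ^ 2 + ((n : ℤ) + 1) * cbZ (n + 1) * (2 * (2 * n + 1) * cbZ n)
        + (2 * (2 * (n : ℤ) + 1) * cbZ n) ^ 2) * h3
  have hcb1 : cbZ 1 = 2 := by unfold cbZ; norm_num [Nat.centralBinom]
  have hcb0 : cbZ 0 = 1 := by unfold cbZ; norm_num
  have hcat0 : catZ 0 = 1 := by unfold catZ; norm_num
  rw [hcb1, hcb0, hcat0]
  linear_combination e5

/-- The recurrence relation satisfied by `U_n` (Theorem 3). -/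
theorem U_recurrence (n : ℕ) (hn : 1 ≤ n) :
    ((n : ℤ) + 1) ^ 3 * (U (n + 1) : ℤ)
      - 8 * (2 * (n : ℤ) + 1) * (8 * (n : ℤ) ^ 2 + 8 * (n : ℤ) + 5) * (U n : ℤ)
      + 4096 * (n : ℤ) ^ 3 * (U (n - 1) : ℤ) = 0 := by
  rw [U_eq, U_eq, U_eq, show n - 1 + 1 = n from by omega]
  rw [show n + 1 + 1 = (n + 1) + 1 from rfl,
    Finset.sum_range_succ (f := fun k => tZ (n + 1) k),
    Finset.sum_range_succ (f := fun k => tZ (n + 1) k),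
    Finset.sum_range_succ (f := fun k => tZ n k)]
  have htel : ∑ k ∈ Finset.range n,
      (((n : ℤ) + 1) ^ 3 * tZ (n + 1) k
        - 8 * (2 * (n : ℤ) + 1) * (8 * (n : ℤ) ^ 2 + 8 * (n : ℤ) + 5) * tZ n k
        + 4096 * (n : ℤ) ^ 3 * tZ (n - 1) k)
      = gZ n n - gZ n 0 := by
    rw [← Finset.sum_range_sub (f := fun k => gZ n k)]
    refine Finset.sum_congr rfl fun k hk => ?_
    have hkN : k < n := Finset.mem_range.mp hk
    obtain ⟨m, rfl⟩ : ∃ m, n = k + m + 1 := ⟨n - k - 1, by omega⟩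
    have hkey := key k m
    have harith : k + m + 1 - 1 = k + m := by omega
    rw [harith]
    push_cast at hkey ⊢
    linear_combination hkey
  have hsum := htel
  rw [Finset.sum_add_distrib, Finset.sum_sub_distrib, ← Finset.mul_sum, ← Finset.mul_sum,
    ← Finset.mul_sum] at hsum
  have hb := key2 n
  have htop : tZ (n + 1) (n + 1) = cbZ (n + 1) ^ 3 := by
    unfold tZ
    rw [Nat.sub_self]
    simp [cbZ]
  have hg0 : gZ n 0 = 0 := by unfold gZ; push_cast; ring
  linear_combination hsum + hb + ((n : ℤ) + 1) ^ 3 * htop - hg0
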